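/- Fix n ≥ 1 and consider Boolean functions on 2n inputs, i.e., elements of (Fin (2n) → Bool) → Bool, with the pointwise lattice structure (pointwise AND as meet and pointwise OR as join). Let G be the set consisting of, for each i ∈ Fin n, the function d ↦ d(2i) AND d(2i+1) and the function d ↦ d(2i) OR d(2i+1) (the pairwise conjunctions and disjunctions over the n disjoint pairs of inputs). Then both threshold functions Th_{≥ n+1} (true iff at least n+1 of the 2n inputs are true) and Th_{≥ n} (true iff at least n of the 2n inputs are true) belong to the lattice closure of G, i.e., they can be constructed from G by finitely many pointwise conjunctions and disjunctions. -/

import Mathlib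

open Finset

private lemma bool_sup_eq (a b : Bool) : a ⊔ b = (a || b) := rfl

private lemma bool_inf_iff {β : Type*} (s : Finset β) (f : β → Bool) :
    s.inf f = true ↔ ∀ i ∈ s, f i = true := Finset.inf_eq_top_iff f s

private lemma bool_sup'_iff {β : Type*} (s : Finset β) (h : s.Nonempty) (f : β → Bool) :
    s.sup' h f = true ↔ ∃ i ∈ s, f i = true := by
  rw [Finset.sup'_eq_sup]
  constructor
  · intro hs
    by_contra hcon
    push_neg at hcon
    have hb : s.sup f = ⊥ := (Finset.sup_eq_bot_iff f s).2
      (fun i hi => by have := hcon i hi; revert this; cases f i <;> simp)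
    rw [hs] at hb
    exact Bool.noConfusion hb
  · rintro ⟨i, hi, hfi⟩
    have h2 := Finset.le_sup (f := f) hi
    rw [hfi] at h2
    exact top_le_iff.mp h2

private lemma sum_range_two_mul (n : ℕ) (f : ℕ → ℕ) :
    ∑ i ∈ Finset.range (2 * n), f i
      = ∑ i ∈ Finset.range n, (f (2 * i) + f (2 * i + 1)) := by
  induction n with
  | zero => simp
  | succ n ih =>
    rw [Finset.sum_range_succ, ← ih, show 2 * (n + 1) = (2 * n + 1) + 1 by ring,
      Finset.sum_range_succ, Finset.sum_range_succ]
    ring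

private lemma threshold_mem (n m c : ℕ) (hn : 1 ≤ n) (hc : c ≤ 1)
    (G : Set ((Fin m → Bool) → Bool))
    (a o : Fin n → (Fin m → Bool) → Bool)
    (ha : ∀ i, a i ∈ G) (ho : ∀ i, o i ∈ G)
    (hao : ∀ i d, a i d = true → o i d = true)
    (hcount : ∀ d : Fin m → Bool,
      (Finset.univ.filter fun i => d i = true).card
        = (Finset.univ.filter fun i : Fin n => a i d = true).card
          + (Finset.univ.filter fun i : Fin n => o i d = true).card) :
    (fun d : Fin m → Bool =>
      decide (n + c ≤ (Finset.univ.filter fun i => d i = true).card)) ∈ latticeClosure G := by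
  classical
  have hsup : SupClosed (latticeClosure G) := isSublattice_latticeClosure.supClosed
  have hinf : InfClosed (latticeClosure G) := isSublattice_latticeClosure.infClosed
  have hmem : ∀ f ∈ G, f ∈ latticeClosure G := fun f hf => subset_latticeClosure hf
  have hne : Nonempty (Fin n) := ⟨⟨0, hn⟩⟩
  set i0 : Fin n := ⟨0, hn⟩ with hi0
  set P : Finset (Finset (Fin n) × Finset (Fin n)) :=
    univ.filter (fun p => p.1.Nonempty ∧ p.2.Nonempty ∧ n + c ≤ p.1.card + p.2.card) with hP
  have hPne : P.Nonempty := by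
    refine ⟨({i0}, univ), ?_⟩
    simp only [hP, mem_filter, mem_univ, true_and]
    refine ⟨singleton_nonempty _, univ_nonempty, ?_⟩
    simp only [card_singleton, card_univ, Fintype.card_fin]
    omega
  set F : Finset (Fin n) × Finset (Fin n) → (Fin m → Bool) → Bool :=
    fun p => p.1.inf a ⊓ p.2.inf o with hF
  have hFmem : ∀ p ∈ P, F p ∈ latticeClosure G := by
    intro p hp
    simp only [hP, mem_filter] at hp
    obtain ⟨-, h1, h2, -⟩ := hp
    refine hinf ?_ ?_
    · rw [← Finset.inf'_eq_inf h1]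
      exact hinf.finsetInf'_mem h1 (fun i _ => hmem _ (ha i))
    · rw [← Finset.inf'_eq_inf h2]
      exact hinf.finsetInf'_mem h2 (fun i _ => hmem _ (ho i))
  set E : (Fin m → Bool) → Bool :=
    (if c = 0 then univ.inf' ⟨i0, mem_univ i0⟩ o else P.sup' hPne F) ⊔ P.sup' hPne F with hE
  have hEmem : E ∈ latticeClosure G := by
    refine hsup ?_ (hsup.finsetSup'_mem hPne hFmem)
    split
    · exact hinf.finsetInf'_mem ⟨i0, mem_univ i0⟩ (fun i _ => hmem _ (ho i))
    · exact hsup.finsetSup'_mem hPne hFmem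
  convert hEmem using 1
  funext d
  rw [Bool.eq_iff_iff, decide_eq_true_iff]
  set Ad := univ.filter (fun i : Fin n => a i d = true) with hAd
  set Od := univ.filter (fun i : Fin n => o i d = true) with hOd
  have hsub : Ad ⊆ Od := by
    intro i hi
    simp only [hAd, mem_filter, mem_univ, true_and] at hi
    simp only [hOd, mem_filter, mem_univ, true_and]
    exact hao i d hi
  have hOn : Od.card ≤ n := by
    have := card_filter_le (univ : Finset (Fin n)) (fun i => o i d = true)
    simpa [card_univ] using this
  have hcount' : (univ.filter fun i => d i = true).card = Ad.card + Od.card := hcount d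
  have hE1 : (P.sup' hPne F) d = true ↔ ∃ p ∈ P, p.1 ⊆ Ad ∧ p.2 ⊆ Od := by
    rw [Finset.sup'_apply, bool_sup'_iff]
    refine exists_congr fun p => and_congr_right fun _ => ?_
    have hFd : F p d = ((p.1.inf fun i => a i d) && (p.2.inf fun i => o i d)) := by
      show (p.1.inf a ⊓ p.2.inf o) d = _
      rw [Pi.inf_apply, Finset.inf_apply, Finset.inf_apply]
      rfl
    rw [hFd, Bool.and_eq_true, bool_inf_iff, bool_inf_iff]
    simp only [hAd, hOd, Finset.subset_iff, mem_filter, mem_univ, true_and]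
  have hE0 : (univ.inf' ⟨i0, mem_univ i0⟩ o) d = true ↔ ∀ i : Fin n, o i d = true := by
    erw [Finset.inf'_apply, Finset.inf'_eq_inf, bool_inf_iff]
    simp
  have hEd : E d = true ↔
      ((c = 0 ∧ ∀ i : Fin n, o i d = true) ∨ ∃ p ∈ P, p.1 ⊆ Ad ∧ p.2 ⊆ Od) := by
    rw [hE]
    rw [Pi.sup_apply, bool_sup_eq, Bool.or_eq_true]
    by_cases h0 : c = 0
    · rw [if_pos h0]
      rw [hE0, hE1]
      constructor
      · rintro (h | h)
        · exact Or.inl ⟨h0, h⟩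
        · exact Or.inr h
      · rintro (⟨-, h⟩ | h)
        · exact Or.inl h
        · exact Or.inr h
    · rw [if_neg h0, hE1]
      constructor
      · rintro (h | h) <;> exact Or.inr h
      · rintro (⟨h, -⟩ | h)
        · exact absurd h h0
        · exact Or.inl h
  rw [hcount', hEd]
  constructor
  · intro h
    by_cases hA : Ad.Nonempty
    · refine Or.inr ⟨(Ad, Od), ?_, subset_rfl, subset_rfl⟩
      simp only [hP, mem_filter, mem_univ, true_and]
      exact ⟨hA, hA.mono hsub, h⟩
    · rw [Finset.not_nonempty_iff_eq_empty] at hA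
      have hA0 : Ad.card = 0 := by rw [hA]; simp
      have hc0 : c = 0 := by omega
      have hOcard : Od.card = n := by omega
      have hOu : Od = univ := eq_univ_of_card _ (by rw [hOcard]; simp)
      refine Or.inl ⟨hc0, fun i => ?_⟩
      have : i ∈ Od := hOu ▸ mem_univ i
      simp only [hOd, mem_filter, mem_univ, true_and] at this
      exact this
  · rintro (⟨hc0, hall⟩ | ⟨p, hpP, h1, h2⟩)
    · have hOu : Od = univ := eq_univ_iff_forall.2 fun i => by
        simp only [hOd, mem_filter, mem_univ, true_and]; exact hall i
      have : Od.card = n := by rw [hOu]; simp [card_univ]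
      omega
    · simp only [hP, mem_filter, mem_univ, true_and] at hpP
      obtain ⟨-, -, hle⟩ := hpP
      have c1 := card_le_card h1
      have c2 := card_le_card h2
      omega

private lemma ite_pair (x y : Bool) :
    ((if y = true then 1 else 0) + if x = true then 1 else 0)
      = ((if (x && y) = true then 1 else 0) + if (x || y) = true then 1 else 0) := by
  cases x <;> cases y <;> simp

private def pairEmb (n : ℕ) : Fin n × Bool → Fin (2 * n) :=
  fun p => ⟨2 * p.1.val + p.2.toNat, by
    have := p.1.isLt; have := Bool.toNat_lt p.2; omega⟩

private lemma pairEmb_bij (n : ℕ) : Function.Bijective (pairEmb n) := by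
  rw [Fintype.bijective_iff_injective_and_card]
  constructor
  · rintro ⟨i, b⟩ ⟨j, c⟩ h
    have hval : 2 * i.val + b.toNat = 2 * j.val + c.toNat := congrArg Fin.val h
    have hb := Bool.toNat_lt b
    have hc := Bool.toNat_lt c
    have h1 : i.val = j.val := by omega
    have h2 : b.toNat = c.toNat := by omega
    exact Prod.ext (Fin.ext h1) (by cases b <;> cases c <;> simp_all)
  · simp only [Fintype.card_prod, Fintype.card_fin, Fintype.card_bool]
    omega

private lemma pc_lt0 {n : ℕ} (i : Fin n) : 2 * i.val < 2 * n := by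
  have := i.isLt; omega

private lemma pc_lt1 {n : ℕ} (i : Fin n) : 2 * i.val + 1 < 2 * n := by
  have := i.isLt; omega

private lemma pair_count (n : ℕ) (d : Fin (2 * n) → Bool) :
    (Finset.univ.filter fun i => d i = true).card
      = (Finset.univ.filter fun i : Fin n =>
           (d ⟨2 * i.val, pc_lt0 i⟩ &&
            d ⟨2 * i.val + 1, pc_lt1 i⟩) = true).card
      + (Finset.univ.filter fun i : Fin n =>
           (d ⟨2 * i.val, pc_lt0 i⟩ ||
            d ⟨2 * i.val + 1, pc_lt1 i⟩) = true).card := by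
  classical
  rw [Finset.card_filter, Finset.card_filter, Finset.card_filter]
  rw [← Fintype.sum_bijective (pairEmb n) (pairEmb_bij n)
        (fun p => if d (pairEmb n p) = true then 1 else 0)
        (fun j => if d j = true then 1 else 0) (fun p => rfl)]
  rw [← Finset.sum_add_distrib]
  rw [Fintype.sum_prod_type]
  simp only [Fintype.sum_bool]
  refine Finset.sum_congr rfl fun i _ => ?_
  exact ite_pair (d ⟨2 * i.val, pc_lt0 i⟩)
    (d ⟨2 * i.val + 1, pc_lt1 i⟩)
/-- Both threshold functions `Th_{≥ n+1}` and `Th_{≥ n}` on `2n` Boolean inputs lie in the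
lattice closure (closure under pointwise AND/OR) of the set of pairwise conjunctions and
disjunctions over the `n` disjoint pairs of inputs. -/
theorem thresholds_in_lattice_closure (n : ℕ) (hn : 1 ≤ n)
    (G : Set ((Fin (2 * n) → Bool) → Bool))
    (hG : G = {f | ∃ i : Fin n,
      f = (fun d => d ⟨2 * i.val, by have := i.isLt; omega⟩ &&
                    d ⟨2 * i.val + 1, by have := i.isLt; omega⟩) ∨
      f = (fun d => d ⟨2 * i.val, by have := i.isLt; omega⟩ ||
                    d ⟨2 * i.val + 1, by have := i.isLt; omega⟩)}) :
    (fun d : Fin (2 * n) → Bool =>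
        decide (n + 1 ≤ (Finset.univ.filter fun i => d i = true).card)) ∈ latticeClosure G ∧
    (fun d : Fin (2 * n) → Bool =>
        decide (n ≤ (Finset.univ.filter fun i => d i = true).card)) ∈ latticeClosure G := by
  classical
  have key : ∀ c : ℕ, c ≤ 1 →
      (fun d : Fin (2 * n) → Bool =>
        decide (n + c ≤ (Finset.univ.filter fun i => d i = true).card)) ∈ latticeClosure G := by
    intro c hc
    refine threshold_mem n (2 * n) c hn hc G
      (fun i d => d ⟨2 * i.val, by have := i.isLt; omega⟩ &&
                  d ⟨2 * i.val + 1, by have := i.isLt; omega⟩)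
      (fun i d => d ⟨2 * i.val, by have := i.isLt; omega⟩ ||
                  d ⟨2 * i.val + 1, by have := i.isLt; omega⟩)
      (fun i => by rw [hG]; exact ⟨i, Or.inl rfl⟩)
      (fun i => by rw [hG]; exact ⟨i, Or.inr rfl⟩)
      (fun i d h => by
        rw [Bool.and_eq_true] at h
        rw [Bool.or_eq_true]
        exact Or.inl h.1)
      (fun d => pair_count n d)
  refine ⟨key 1 le_rfl, ?_⟩
  simpa only [Nat.add_zero] using key 0 (by omega)
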